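/- Let $(\Omega_+,\mu_+)$ and $(\Gamma,\mu_\Gamma)$ be finite measure spaces with positive total masses $V_+ > 0$ and $V_\Gamma > 0$. Let $u_+ \in L^2(\mu_+)$, $u_\Gamma, t_+ \in L^2(\mu_\Gamma)$, let $G_+ \geq 0$, and denote $\bar{u}_+ := \frac{1}{V_+}\int u_+\,d\mu_+$ and $\bar{u}_\Gamma := \frac{1}{V_\Gamma}\int u_\Gamma\,d\mu_\Gamma$. Assume there is a constant $C_+^\Gamma > 0$ such that for every $c \in \mathbb{R}$, $\|u_+ - c\|_{L^2(\mu_+)}^2 \leq C_+^\Gamma \big( G_+ + \frac{1}{V_\Gamma}\big|\int_\Gamma (t_+ - c)\,d\mu_\Gamma\big|^2 \big)$. Then $(\bar{u}_+ - \bar{u}_\Gamma)^2 \leq \frac{C_+^\Gamma}{V_+}\big( G_+ + \|t_+ - u_\Gamma\|_{L^2(\mu_\Gamma)}^2 \big)$. -/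

import Mathlib

open MeasureTheory

lemma sq_integral_le_measure_mul_integral_sq
    {α : Type*} [MeasurableSpace α] (μ : Measure α) [IsFiniteMeasure μ]
    (f : α → ℝ) (hf : MemLp f 2 μ) :
    (∫ x, f x ∂μ) ^ 2 ≤ (μ Set.univ).toReal * ∫ x, f x ^ 2 ∂μ := by
  set V : ℝ := (μ Set.univ).toReal with hV
  have hVnn : 0 ≤ V := ENNReal.toReal_nonneg
  have hfi : Integrable f μ := hf.integrable (by norm_num)
  have hfsq : Integrable (fun x => f x ^ 2) μ := hf.integrable_sq
  rcases eq_or_lt_of_le hVnn with h0 | hVpos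
  · have : μ Set.univ = 0 := by
      have := (ENNReal.toReal_eq_zero_iff _).mp h0.symm
      rcases this with h | h
      · exact h
      · exact absurd h (measure_ne_top μ _)
    have hμ : μ = 0 := by
      ext s hs
      exact le_antisymm ((measure_mono (Set.subset_univ s)).trans this.le) (zero_le)
    simp [hμ]
  · set a : ℝ := (∫ x, f x ∂μ) / V with ha
    have h0 : 0 ≤ ∫ x, (f x - a) ^ 2 ∂μ :=
      integral_nonneg fun x => sq_nonneg _
    have hexp : ∫ x, (f x - a) ^ 2 ∂μ
        = (∫ x, f x ^ 2 ∂μ) - 2 * a * (∫ x, f x ∂μ) + a ^ 2 * V := by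
      have : ∀ x, (f x - a) ^ 2 = f x ^ 2 - 2 * a * f x + a ^ 2 := by
        intro x; ring
      have h2a : Integrable (fun x => 2 * a * f x) μ := hfi.const_mul _
      simp_rw [this]
      rw [integral_add (f := fun x => f x ^ 2 - 2 * a * f x) (g := fun _ => a ^ 2)
        (hfsq.sub h2a) (integrable_const _),
        integral_sub hfsq h2a, MeasureTheory.integral_const_mul, integral_const]
      simp only [smul_eq_mul, measureReal_def, ← hV]
      ring
    have key : 0 ≤ (∫ x, f x ^ 2 ∂μ) - 2 * a * (∫ x, f x ∂μ) + a ^ 2 * V := by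
      rw [← hexp]; exact h0
    have ha' : a * V = ∫ x, f x ∂μ := by
      rw [ha, div_mul_cancel₀ _ hVpos.ne']
    nlinarith [sq_nonneg a, hVpos]

theorem average_difference_trace_estimate
    {Ωp Γ : Type*} [MeasurableSpace Ωp] [MeasurableSpace Γ]
    (μp : Measure Ωp) (μg : Measure Γ)
    [IsFiniteMeasure μp] [IsFiniteMeasure μg]
    (Vp Vg : ℝ)
    (hVp_def : Vp = (μp Set.univ).toReal) (hVg_def : Vg = (μg Set.univ).toReal)
    (hVp : 0 < Vp) (hVg : 0 < Vg)
    (up : Ωp → ℝ) (ug tp : Γ → ℝ)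
    (hup : MemLp up 2 μp) (hug : MemLp ug 2 μg) (htp : MemLp tp 2 μg)
    (Gp : ℝ) (hGp : 0 ≤ Gp)
    (ubp ubg : ℝ)
    (hubp : ubp = (1 / Vp) * ∫ x, up x ∂μp)
    (hubg : ubg = (1 / Vg) * ∫ y, ug y ∂μg)
    (CpG : ℝ) (hCpG : 0 < CpG)
    (hTrace : ∀ c : ℝ, (∫ x, (up x - c) ^ 2 ∂μp)
      ≤ CpG * (Gp + (1 / Vg) * |∫ y, (tp y - c) ∂μg| ^ 2)) :
    (ubp - ubg) ^ 2 ≤ (CpG / Vp) * (Gp + ∫ y, (tp y - ug y) ^ 2 ∂μg) := by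
  have hupI : Integrable up μp := hup.integrable (by norm_num)
  have hugI : Integrable ug μg := hug.integrable (by norm_num)
  have htpI : Integrable tp μg := htp.integrable (by norm_num)
  -- Step 1: Cauchy-Schwarz in Ωp
  have h1 : ∫ x, (up x - ubg) ∂μp = Vp * (ubp - ubg) := by
    rw [integral_sub hupI (integrable_const _), integral_const, hubp]
    simp only [smul_eq_mul, measureReal_def, ← hVp_def]
    field_simp [hVp.ne']
  have hCS1 : (∫ x, (up x - ubg) ∂μp) ^ 2
      ≤ Vp * ∫ x, (up x - ubg) ^ 2 ∂μp := by
    have := sq_integral_le_measure_mul_integral_sq μp (fun x => up x - ubg)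
      (hup.sub (memLp_const _))
    rwa [← hVp_def] at this
  -- Step 2: shift the trace mean
  have h2 : ∫ y, (tp y - ubg) ∂μg = ∫ y, (tp y - ug y) ∂μg := by
    rw [integral_sub htpI (integrable_const _), integral_sub htpI hugI,
      integral_const, hubg]
    simp only [smul_eq_mul, measureReal_def, ← hVg_def]
    field_simp [hVg.ne']
  -- Step 3: Cauchy-Schwarz in Γ
  have hCS2 : |∫ y, (tp y - ug y) ∂μg| ^ 2 ≤ Vg * ∫ y, (tp y - ug y) ^ 2 ∂μg := by
    rw [sq_abs]
    have := sq_integral_le_measure_mul_integral_sq μg (fun y => tp y - ug y)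
      (htp.sub hug)
    rwa [← hVg_def] at this
  have hT := hTrace ubg
  have hfinal : Vp ^ 2 * (ubp - ubg) ^ 2
      ≤ Vp * (CpG * (Gp + ∫ y, (tp y - ug y) ^ 2 ∂μg)) := by
    calc Vp ^ 2 * (ubp - ubg) ^ 2 = (∫ x, (up x - ubg) ∂μp) ^ 2 := by
          rw [h1]; ring
      _ ≤ Vp * ∫ x, (up x - ubg) ^ 2 ∂μp := hCS1
      _ ≤ Vp * (CpG * (Gp + (1 / Vg) * |∫ y, (tp y - ubg) ∂μg| ^ 2)) := by
          exact mul_le_mul_of_nonneg_left hT hVp.le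
      _ ≤ Vp * (CpG * (Gp + ∫ y, (tp y - ug y) ^ 2 ∂μg)) := by
          apply mul_le_mul_of_nonneg_left _ hVp.le
          apply mul_le_mul_of_nonneg_left _ hCpG.le
          apply add_le_add (le_refl _)
          rw [h2]
          calc (1 / Vg) * |∫ y, (tp y - ug y) ∂μg| ^ 2
              ≤ (1 / Vg) * (Vg * ∫ y, (tp y - ug y) ^ 2 ∂μg) := by
                apply mul_le_mul_of_nonneg_left hCS2 (by positivity)
            _ = ∫ y, (tp y - ug y) ^ 2 ∂μg := by field_simp
  rw [div_mul_eq_mul_div, le_div_iff₀ hVp]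
  nlinarith [hfinal, sq_nonneg (ubp - ubg)]
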